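/- Let (α_1, …, α_r) and (β_1, …, β_m) be tuples of positive integers with r ≥ 1, m ≥ 1, α_r ≥ 2 and β_m ≥ 2. Then ζ(α_1, …, α_r) · ζ*(β_1, …, β_m) = Z_U(α_1, …, α_r; β_1, …, β_m) + Z_U(α_1, …, α_r, β_m; β_1, …, β_{m-1}). -/

import Mathlib

open scoped BigOperators

/-- The multiple zeta value `ζ(a₁, …, a_r)`, as a sum over strictly increasing
tuples of positive integers. -/
noncomputable def mz (a : List ℕ) : ℝ :=
  ∑' k : {k : Fin a.length → ℕ+ // StrictMono k},
    ∏ i, (1 : ℝ) / ((k.1 i : ℕ) : ℝ) ^ a.get i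

/-- The multiple zeta-star value `ζ⋆(a₁, …, a_r)`, as a sum over weakly increasing
tuples of positive integers. -/
noncomputable def mzs (a : List ℕ) : ℝ :=
  ∑' k : {k : Fin a.length → ℕ+ // Monotone k},
    ∏ i, (1 : ℝ) / ((k.1 i : ℕ) : ℝ) ^ a.get i

/-- `Z_U(α; β)`: sum over `1 ≤ k₁ < ⋯ < k_r` and `1 ≤ ℓ₁ ≤ ⋯ ≤ ℓ_m ≤ k_r` of
`k₁^{-α₁} ⋯ k_r^{-α_r} ℓ₁^{-β₁} ⋯ ℓ_m^{-β_m}` (the `ℓ`-sum is `1` when `m = 0`). -/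
noncomputable def ZU (a b : List ℕ) : ℝ :=
  ∑' p : {p : (Fin a.length → ℕ+) × (Fin b.length → ℕ+) //
      StrictMono p.1 ∧ Monotone p.2 ∧
      ∀ (i : Fin a.length) (j : Fin b.length), i.1 = a.length - 1 → p.2 j ≤ p.1 i},
    (∏ i, (1 : ℝ) / ((p.1.1 i : ℕ) : ℝ) ^ a.get i) *
      ∏ j, (1 : ℝ) / ((p.1.2 j : ℕ) : ℝ) ^ b.get j

/-- `Z_L(α; β)`: sum over `1 ≤ k₁ < ⋯ < k_r` and `k₁ ≤ ℓ₁ ≤ ⋯ ≤ ℓ_m` of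
`k₁^{-α₁} ⋯ k_r^{-α_r} ℓ₁^{-β₁} ⋯ ℓ_m^{-β_m}` (the `ℓ`-sum is `1` when `m = 0`). -/
noncomputable def ZL (a b : List ℕ) : ℝ :=
  ∑' p : {p : (Fin a.length → ℕ+) × (Fin b.length → ℕ+) //
      StrictMono p.1 ∧ Monotone p.2 ∧
      ∀ (i : Fin a.length) (j : Fin b.length), i.1 = 0 → p.1 i ≤ p.2 j},
    (∏ i, (1 : ℝ) / ((p.1.1 i : ℕ) : ℝ) ^ a.get i) *
      ∏ j, (1 : ℝ) / ((p.1.2 j : ℕ) : ℝ) ^ b.get j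

/-- `Z_B(α; β)`: sum over `1 ≤ k₁ < ⋯ < k_r` and `k₁ ≤ ℓ₁ ≤ ⋯ ≤ ℓ_m ≤ k_r` of
`k₁^{-α₁} ⋯ k_r^{-α_r} ℓ₁^{-β₁} ⋯ ℓ_m^{-β_m}` (the `ℓ`-sum is `1` when `m = 0`). -/
noncomputable def ZB (a b : List ℕ) : ℝ :=
  ∑' p : {p : (Fin a.length → ℕ+) × (Fin b.length → ℕ+) //
      StrictMono p.1 ∧ Monotone p.2 ∧
      (∀ (i : Fin a.length) (j : Fin b.length), i.1 = 0 → p.1 i ≤ p.2 j) ∧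
      ∀ (i : Fin a.length) (j : Fin b.length), i.1 = a.length - 1 → p.2 j ≤ p.1 i},
    (∏ i, (1 : ℝ) / ((p.1.1 i : ℕ) : ℝ) ^ a.get i) *
      ∏ j, (1 : ℝ) / ((p.1.2 j : ℕ) : ℝ) ^ b.get j


open scoped ENNReal

namespace MZVAux


/-- ENNReal version of the product term. -/
noncomputable def trm {n : ℕ} (a : Fin n → ℕ) (k : Fin n → ℕ+) : ℝ≥0∞ :=
  ∏ i, 1 / ((k i : ℕ) : ℝ≥0∞) ^ a i

lemma one_le_cast_pnat (x : ℕ+) : (1 : ℝ≥0∞) ≤ ((x : ℕ) : ℝ≥0∞) := by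
  have : 1 ≤ (x:ℕ) := x.one_le
  exact_mod_cast this

lemma factor_le_one {x : ℕ+} {e : ℕ} : 1 / ((x : ℕ) : ℝ≥0∞) ^ e ≤ 1 := by
  rw [ENNReal.div_le_iff_le_mul] <;> simp [one_le_pow₀ (one_le_cast_pnat x)]

lemma trm_ne_top {n : ℕ} (a : Fin n → ℕ) (k : Fin n → ℕ+) : trm a k ≠ ⊤ := by
  refine (ENNReal.prod_lt_top fun i _ => ?_).ne
  exact lt_of_le_of_lt factor_le_one (by norm_num)

lemma trm_toReal {n : ℕ} (a : Fin n → ℕ) (k : Fin n → ℕ+) :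
    (trm a k).toReal = ∏ i, (1 : ℝ) / ((k i : ℕ) : ℝ) ^ a i := by
  rw [trm, ENNReal.toReal_prod]
  refine Finset.prod_congr rfl fun i _ => ?_
  rw [ENNReal.toReal_div, ENNReal.toReal_pow, ENNReal.toReal_natCast]
  simp

lemma trm_le_one {n : ℕ} (a : Fin n → ℕ) (k : Fin n → ℕ+) : trm a k ≤ 1 :=
  Finset.prod_le_one (fun _ _ => zero_le) (fun i _ => factor_le_one)

/-- Monotone cons characterization. -/
lemma monotone_cons_iff {α : Type*} [Preorder α] {m : ℕ} (x : α) (f : Fin m → α) :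
    Monotone (Fin.cons x f : Fin (m + 1) → α) ↔ Monotone f ∧ ∀ j, x ≤ f j := by
  constructor
  · intro h
    refine ⟨fun i j hij => ?_, fun j => ?_⟩
    · have := h (show (i.succ : Fin (m + 1)) ≤ j.succ by
        simpa [Fin.succ_le_succ_iff] using hij)
      simpa using this
    · have := h (show (0 : Fin (m + 1)) ≤ j.succ from Fin.zero_le _)
      simpa using this
  · rintro ⟨hf, hx⟩ i j hij
    rcases Fin.eq_zero_or_eq_succ i with rfl | ⟨i', rfl⟩
    · rcases Fin.eq_zero_or_eq_succ j with rfl | ⟨j', rfl⟩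
      · simp
      · simpa using hx j'
    · rcases Fin.eq_zero_or_eq_succ j with rfl | ⟨j', rfl⟩
      · exact absurd hij (by simp [Fin.le_def])
      · simpa using hf (by simpa [Fin.succ_le_succ_iff] using hij)

/-- Monotone snoc characterization. -/
lemma monotone_snoc_iff {α : Type*} [Preorder α] {m : ℕ} (x : α) (f : Fin m → α) :
    Monotone (Fin.snoc f x : Fin (m + 1) → α) ↔ Monotone f ∧ ∀ j, f j ≤ x := by
  constructor
  · intro h
    refine ⟨fun i j hij => ?_, fun j => ?_⟩
    · have := h (show (i.castSucc : Fin (m + 1)) ≤ j.castSucc by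
        simpa [Fin.castSucc_le_castSucc_iff] using hij)
      simpa using this
    · have := h (show (j.castSucc : Fin (m + 1)) ≤ Fin.last m from Fin.le_last _)
      simpa using this
  · rintro ⟨hf, hx⟩ i j hij
    rcases Fin.eq_castSucc_or_eq_last i with ⟨i', rfl⟩ | rfl
    · rcases Fin.eq_castSucc_or_eq_last j with ⟨j', rfl⟩ | rfl
      · simpa using hf (by simpa [Fin.castSucc_le_castSucc_iff] using hij)
      · simpa using hx i'
    · rcases Fin.eq_castSucc_or_eq_last j with ⟨j', rfl⟩ | rfl
      · have : (Fin.last m : Fin (m+1)) = j'.castSucc := le_antisymm hij (Fin.le_last _)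
        rw [← this]
      · simp
/-- StrictMono snoc characterization. -/
lemma strictMono_snoc_iff {α : Type*} [Preorder α] {m : ℕ} (x : α) (f : Fin m → α) :
    StrictMono (Fin.snoc f x : Fin (m + 1) → α) ↔ StrictMono f ∧ ∀ j, f j < x := by
  constructor
  · intro h
    refine ⟨fun i j hij => ?_, fun j => ?_⟩
    · have := h (show (i.castSucc : Fin (m + 1)) < j.castSucc by
        simpa [Fin.castSucc_lt_castSucc_iff] using hij)
      simpa using this
    · have := h (show (j.castSucc : Fin (m + 1)) < Fin.last m from Fin.castSucc_lt_last _)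
      simpa using this
  · rintro ⟨hf, hx⟩ i j hij
    rcases Fin.eq_castSucc_or_eq_last i with ⟨i', rfl⟩ | rfl
    · rcases Fin.eq_castSucc_or_eq_last j with ⟨j', rfl⟩ | rfl
      · simpa using hf (by simpa [Fin.castSucc_lt_castSucc_iff] using hij)
      · simpa using hx i'
    · rcases Fin.eq_castSucc_or_eq_last j with ⟨j', rfl⟩ | rfl
      · exact absurd hij (by simp [Fin.lt_def, Fin.last])
      · exact absurd hij (lt_irrefl _)




lemma trm_cons {m : ℕ} (b : Fin (m + 1) → ℕ) (x : ℕ+) (t : Fin m → ℕ+) :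
    trm b (Fin.cons x t) = (1 / ((x : ℕ) : ℝ≥0∞) ^ b 0) * trm (Fin.tail b) t := by
  rw [trm, Fin.prod_univ_succ]
  simp [trm, Fin.tail]

lemma trm_snoc {n : ℕ} (a : Fin n → ℕ) (c : ℕ) (k : Fin n → ℕ+) (x : ℕ+) :
    trm (Fin.snoc a c) (Fin.snoc k x) = trm a k * (1 / ((x : ℕ) : ℝ≥0∞) ^ c) := by
  rw [trm, Fin.prod_univ_castSucc]
  simp [trm]

/-- tail of inverse squares. -/
lemma tsum_inv_sq_tail (c : ℕ+) :
    ∑' n : {n : ℕ+ // c ≤ n}, 1 / ((n.1 : ℕ) : ℝ≥0∞) ^ 2 ≤ 2 / ((c : ℕ) : ℝ≥0∞) := by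
  refine Summable.tsum_le_of_sum_le ENNReal.summable fun s => ?_
  classical
  set t : Finset ℕ := s.image (fun x => (x.1 : ℕ)) with ht
  have hinj : Set.InjOn (fun x : {n : ℕ+ // c ≤ n} => (x.1 : ℕ)) s := by
    intro x _ y _ h
    exact Subtype.ext (PNat.coe_injective h)
  have h1 : ∑ x ∈ s, 1 / ((x.1 : ℕ) : ℝ≥0∞) ^ 2 = ∑ i ∈ t, 1 / (i : ℝ≥0∞) ^ 2 := by
    rw [ht, Finset.sum_image (fun x hx y hy h => hinj hx hy h)]
  rw [h1]
  set N : ℕ := t.sup id + 1 with hNdef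
  have hsub : t ⊆ Finset.Ioo ((c : ℕ) - 1) N := by
    intro i hi
    rw [Finset.mem_Ioo]
    have hiN : i ≤ t.sup id := Finset.le_sup (f := id) hi
    obtain ⟨x, _, rfl⟩ := Finset.mem_image.mp hi
    have hc : (c : ℕ) ≤ (x.1 : ℕ) := x.2
    have := c.pos
    exact ⟨by omega, by omega⟩
  refine le_trans (Finset.sum_le_sum_of_subset hsub) ?_
  have hterm : ∀ i ∈ Finset.Ioo ((c : ℕ) - 1) N,
      (1 / ((i:ℝ≥0∞))^2) = ENNReal.ofReal (((i:ℝ))^2)⁻¹ := by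
    intro i hi
    have hi0 : 0 < i := by have := (Finset.mem_Ioo.mp hi).1; have := c.pos; omega
    rw [ENNReal.ofReal_inv_of_pos (by positivity), ENNReal.ofReal_pow (by positivity)]
    simp [ENNReal.ofReal_natCast, one_div]
  rw [Finset.sum_congr rfl hterm, ← ENNReal.ofReal_sum_of_nonneg (fun i _ => by positivity)]
  have hb := sum_Ioo_inv_sq_le (α := ℝ) ((c : ℕ) - 1) N
  have hc1 : ((((c : ℕ) - 1 : ℕ) : ℝ) + 1) = ((c : ℕ) : ℝ) := by
    have := c.pos
    have : ((c:ℕ) - 1 : ℕ) + 1 = (c : ℕ) := by omega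
    exact_mod_cast congrArg (Nat.cast : ℕ → ℝ) this
  rw [hc1] at hb
  refine le_trans (ENNReal.ofReal_le_ofReal hb) ?_
  rw [ENNReal.ofReal_div_of_pos (by positivity), ENNReal.ofReal_natCast,
    show ENNReal.ofReal (2:ℝ) = 2 by norm_num]




lemma inv_pow_le {x : ℕ+} {k : ℕ} (hk : 2 ≤ k) :
    1 / ((x:ℕ) : ℝ≥0∞) ^ k ≤ 1 / ((x:ℕ) : ℝ≥0∞) ^ 2 := by
  rw [one_div, one_div]
  exact ENNReal.inv_le_inv.mpr (pow_le_pow_right₀ (one_le_cast_pnat x) hk)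

lemma mono_bound : ∀ m : ℕ, ∀ b : Fin (m+1) → ℕ, (∀ j, 1 ≤ b j) → 2 ≤ b (Fin.last m) →
    ∀ c : ℕ+,
    ∑' l : {l : Fin (m+1) → ℕ+ // Monotone l ∧ ∀ j, c ≤ l j},
      trm b l.1 ≤ 2 ^ (m+1) / ((c : ℕ) : ℝ≥0∞) := by
  intro m
  induction m with
  | zero =>
    intro b _ hlast c
    let e : {n : ℕ+ // c ≤ n} ≃ {l : Fin 1 → ℕ+ // Monotone l ∧ ∀ j, c ≤ l j} :=
      { toFun := fun n => ⟨fun _ => n.1, monotone_const, fun _ => n.2⟩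
        invFun := fun l => ⟨l.1 0, l.2.2 0⟩
        left_inv := fun n => rfl
        right_inv := fun l => Subtype.ext (funext fun j => by rw [Fin.eq_zero j])
      }
    rw [← e.tsum_eq (fun l => trm b l.1)]
    have hterm : ∀ n : {n : ℕ+ // c ≤ n},
        trm b (e n).1 ≤ 1 / ((n.1 : ℕ) : ℝ≥0∞) ^ 2 := by
      intro n
      have h0 : trm b (e n).1 = trm b (fun _ : Fin 1 => n.1) := rfl
      rw [h0, trm, Fin.prod_univ_one]
      have h2 : 2 ≤ b 0 := by
        have h3 := Fin.eq_zero (Fin.last 0)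
        rw [h3] at hlast
        exact hlast
      exact inv_pow_le h2
    refine le_trans (Summable.tsum_le_tsum hterm ENNReal.summable ENNReal.summable) ?_
    refine le_trans (tsum_inv_sq_tail c) ?_
    rw [pow_one]
  | succ m IH =>
    intro b hb hlast c
    set dom := {l : Fin (m+2) → ℕ+ // Monotone l ∧ ∀ j, c ≤ l j}
    set sig := Σ x : {x : ℕ+ // c ≤ x}, {t : Fin (m+1) → ℕ+ // Monotone t ∧ ∀ j, x.1 ≤ t j}
    have hf : ∀ p : sig, Monotone (Fin.cons p.1.1 p.2.1 : Fin (m+2) → ℕ+) ∧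
        ∀ j : Fin (m+2), c ≤ (Fin.cons p.1.1 p.2.1 : Fin (m+2) → ℕ+) j := by
      rintro ⟨⟨x, hx⟩, ⟨t, ht⟩⟩
      refine ⟨(monotone_cons_iff x t).2 ⟨ht.1, ht.2⟩, fun j => ?_⟩
      rcases Fin.eq_zero_or_eq_succ j with rfl | ⟨j', rfl⟩
      · simpa using hx
      · simpa using le_trans hx (ht.2 j')
    let E : sig → dom := fun p => ⟨Fin.cons p.1.1 p.2.1, hf p⟩
    have hbij : Function.Bijective E := by
      constructor
      · rintro ⟨⟨x, hx⟩, ⟨t, ht⟩⟩ ⟨⟨x', hx'⟩, ⟨t', ht'⟩⟩ h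
        have hv : (Fin.cons x t : Fin (m+2) → ℕ+) = Fin.cons x' t' :=
          congrArg Subtype.val h
        have hx0 : x = x' := by
          have := congrFun hv 0; simpa using this
        have ht0 : t = t' := by
          funext j
          have := congrFun hv j.succ; simpa using this
        subst hx0; subst ht0; rfl
      · rintro ⟨l, hl⟩
        have hmt : Monotone (Fin.tail l) := fun i j hij =>
          hl.1 (by simpa [Fin.succ_le_succ_iff] using hij)
        have hll : ∀ j, l 0 ≤ Fin.tail l j := fun j => hl.1 (Fin.zero_le _)
        refine ⟨⟨⟨l 0, hl.2 0⟩, ⟨Fin.tail l, hmt, hll⟩⟩, ?_⟩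
        exact Subtype.ext (Fin.cons_self_tail l)
    have key : ∑' l : dom, trm b l.1 = ∑' p : sig, trm b (E p).1 :=
      ((Equiv.ofBijective E hbij).tsum_eq (fun l => trm b l.1)).symm
    rw [key]
    have hsig : ∑' p : sig, trm b (E p).1 =
        ∑' x : {x : ℕ+ // c ≤ x}, ∑' t : {t : Fin (m+1) → ℕ+ // Monotone t ∧ ∀ j, x.1 ≤ t j},
          (1 / ((x.1 : ℕ) : ℝ≥0∞) ^ b 0) * trm (Fin.tail b) t.1 := by
      rw [ENNReal.tsum_sigma' (fun p : sig => trm b (E p).1)]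
      congr 1
      funext x
      congr 1
      funext t
      exact trm_cons b x.1 t.1
    rw [hsig]
    have htail1 : ∀ j, 1 ≤ Fin.tail b j := fun j => hb _
    have htail2 : 2 ≤ Fin.tail b (Fin.last m) := by
      rw [Fin.tail]
      rw [Fin.succ_last]
      exact hlast
    have hstep : ∀ x : {x : ℕ+ // c ≤ x},
        ∑' t : {t : Fin (m+1) → ℕ+ // Monotone t ∧ ∀ j, x.1 ≤ t j},
          (1 / ((x.1 : ℕ) : ℝ≥0∞) ^ b 0) * trm (Fin.tail b) t.1
          ≤ 2 ^ (m+1) * (1 / ((x.1 : ℕ) : ℝ≥0∞) ^ 2) := by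
      intro x
      rw [ENNReal.tsum_mul_left]
      have h1 := IH (Fin.tail b) htail1 htail2 x.1
      calc 1 / ((x.1 : ℕ) : ℝ≥0∞) ^ b 0 *
            ∑' t : {t : Fin (m+1) → ℕ+ // Monotone t ∧ ∀ j, x.1 ≤ t j}, trm (Fin.tail b) t.1
          ≤ 1 / ((x.1 : ℕ) : ℝ≥0∞) ^ b 0 * (2 ^ (m+1) / ((x.1 : ℕ) : ℝ≥0∞)) := by
            exact mul_le_mul_right h1 _
        _ = 2 ^ (m+1) * (1 / ((x.1 : ℕ) : ℝ≥0∞) ^ (b 0 + 1)) := by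
            rw [div_eq_mul_inv, div_eq_mul_inv, div_eq_mul_inv, one_mul, one_mul]
            have hx0 : ((x.1 : ℕ) : ℝ≥0∞) ≠ 0 := by
              exact_mod_cast x.1.pos.ne'
            rw [pow_succ ((x.1 : ℕ) : ℝ≥0∞) (b 0),
              ENNReal.mul_inv (Or.inl (pow_ne_zero _ hx0)) (Or.inr hx0)]
            ring
        _ ≤ 2 ^ (m+1) * (1 / ((x.1 : ℕ) : ℝ≥0∞) ^ 2) := by
            exact mul_le_mul_right (inv_pow_le (by have := hb 0; omega)) _
    refine le_trans (Summable.tsum_le_tsum hstep ENNReal.summable ENNReal.summable) ?_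
    rw [ENNReal.tsum_mul_left]
    refine le_trans (mul_le_mul_right (tsum_inv_sq_tail c) _) ?_
    rw [show ((2:ℝ≥0∞)^(m+1+1)) = 2^(m+1) * 2 from pow_succ 2 (m+1), mul_div_assoc]




noncomputable def ZUE {n m : ℕ} (a : Fin n → ℕ) (b : Fin m → ℕ) : ℝ≥0∞ :=
  ∑' p : {p : (Fin n → ℕ+) × (Fin m → ℕ+) // StrictMono p.1 ∧ Monotone p.2 ∧
      ∀ (i : Fin n) (j : Fin m), i.1 = n - 1 → p.2 j ≤ p.1 i},
    trm a p.1.1 * trm b p.1.2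

def SSet (r m : ℕ) : Set ((Fin (r+1) → ℕ+) × (Fin (m+1) → ℕ+)) :=
  {q | StrictMono q.1 ∧ Monotone q.2}

def U1Set (r m : ℕ) : Set ((Fin (r+1) → ℕ+) × (Fin (m+1) → ℕ+)) :=
  {q | StrictMono q.1 ∧ Monotone q.2 ∧
    ∀ (i : Fin (r+1)) (j : Fin (m+1)), i.1 = (r+1) - 1 → q.2 j ≤ q.1 i}

def U2Set (r m : ℕ) : Set ((Fin (r+1) → ℕ+) × (Fin (m+1) → ℕ+)) :=
  {q | StrictMono q.1 ∧ Monotone q.2 ∧ q.1 (Fin.last r) < q.2 (Fin.last m)}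

noncomputable def GFun {r m : ℕ} (a : Fin (r+1) → ℕ) (b : Fin (m+1) → ℕ)
    (q : (Fin (r+1) → ℕ+) × (Fin (m+1) → ℕ+)) : ℝ≥0∞ :=
  trm a q.1 * trm b q.2

theorem step1 {r m : ℕ} (a : Fin (r+1) → ℕ) (b : Fin (m+1) → ℕ) :
    (∑' k : {k : Fin (r+1) → ℕ+ // StrictMono k}, trm a k.1) *
      (∑' l : {l : Fin (m+1) → ℕ+ // Monotone l}, trm b l.1)
      = ∑' q : SSet r m, GFun a b q.1 := by
  let e := (Equiv.subtypeProdEquivProd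
    (p := fun k : Fin (r+1) → ℕ+ => StrictMono k)
    (q := fun l : Fin (m+1) → ℕ+ => Monotone l))
  have h2 : ∑' q : {q : (Fin (r+1) → ℕ+) × (Fin (m+1) → ℕ+) //
        StrictMono q.1 ∧ Monotone q.2}, trm a q.1.1 * trm b q.1.2
      = ∑' p : {k : Fin (r+1) → ℕ+ // StrictMono k} × {l : Fin (m+1) → ℕ+ // Monotone l},
          trm a p.1.1 * trm b p.2.1 := by
    rw [← Equiv.tsum_eq e.symm (fun q => trm a q.1.1 * trm b q.1.2)]
    exact tsum_congr fun p => by obtain ⟨x, y⟩ := p; rfl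
  have h3 : ∑' p : {k : Fin (r+1) → ℕ+ // StrictMono k} × {l : Fin (m+1) → ℕ+ // Monotone l},
          trm a p.1.1 * trm b p.2.1
      = ∑' k : {k : Fin (r+1) → ℕ+ // StrictMono k},
          ∑' l : {l : Fin (m+1) → ℕ+ // Monotone l}, trm a k.1 * trm b l.1 := by
    have h := ENNReal.tsum_prod (f := fun (k : {k : Fin (r+1) → ℕ+ // StrictMono k})
      (l : {l : Fin (m+1) → ℕ+ // Monotone l}) => trm a k.1 * trm b l.1)
    exact h
  have h4 : ∑' q : SSet r m, GFun a b q.1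
      = ∑' q : {q : (Fin (r+1) → ℕ+) × (Fin (m+1) → ℕ+) //
        StrictMono q.1 ∧ Monotone q.2}, trm a q.1.1 * trm b q.1.2 := rfl
  rw [h4, h2, h3]
  simp_rw [ENNReal.tsum_mul_left]
  rw [ENNReal.tsum_mul_right]

theorem step2 {r m : ℕ} (a : Fin (r+1) → ℕ) (b : Fin (m+1) → ℕ) :
    ∑' q : SSet r m, GFun a b q.1
      = (∑' q : U1Set r m, GFun a b q.1) + (∑' q : U2Set r m, GFun a b q.1) := by
  rw [tsum_subtype (SSet r m) (GFun a b), tsum_subtype (U1Set r m) (GFun a b),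
    tsum_subtype (U2Set r m) (GFun a b), ← ENNReal.tsum_add]
  refine tsum_congr fun x => ?_
  by_cases hmem : x ∈ SSet r m
  · have hU1iff : x ∈ U1Set r m ↔ x.2 (Fin.last m) ≤ x.1 (Fin.last r) := by
      constructor
      · intro h
        exact h.2.2 (Fin.last r) (Fin.last m) rfl
      · intro h
        exact ⟨hmem.1, hmem.2, fun i j hi => by
          have hieq : i = Fin.last r := Fin.ext hi
          subst hieq
          exact le_trans (hmem.2 (Fin.le_last j)) h⟩
    by_cases hc : x.2 (Fin.last m) ≤ x.1 (Fin.last r)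
    · rw [Set.indicator_of_mem hmem, Set.indicator_of_mem (hU1iff.2 hc),
        Set.indicator_of_notMem (show x ∉ U2Set r m from fun h => absurd h.2.2 (not_lt.2 hc)),
        add_zero]
    · rw [Set.indicator_of_mem hmem,
        Set.indicator_of_notMem (fun h => hc (hU1iff.1 h)),
        Set.indicator_of_mem (show x ∈ U2Set r m from ⟨hmem.1, hmem.2, not_le.1 hc⟩),
        zero_add]
  · rw [Set.indicator_of_notMem hmem,
      Set.indicator_of_notMem (fun h : x ∈ U1Set r m => hmem ⟨h.1, h.2.1⟩),
      Set.indicator_of_notMem (fun h : x ∈ U2Set r m => hmem ⟨h.1, h.2.1⟩), add_zero]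

theorem stepU1 {r m : ℕ} (a : Fin (r+1) → ℕ) (b : Fin (m+1) → ℕ) :
    ∑' q : U1Set r m, GFun a b q.1 = ZUE a b := rfl

theorem stepU2 {r m : ℕ} (a : Fin (r+1) → ℕ) (b : Fin (m+1) → ℕ) :
    ∑' q : U2Set r m, GFun a b q.1
      = ZUE (Fin.snoc a (b (Fin.last m))) (Fin.init b) := by
  let E2 : ((Fin (r+1) → ℕ+) × (Fin (m+1) → ℕ+)) ≃ ((Fin (r+2) → ℕ+) × (Fin m → ℕ+)) :=
    { toFun := fun q => (Fin.snoc q.1 (q.2 (Fin.last m)), Fin.init q.2)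
      invFun := fun p => (Fin.init p.1, Fin.snoc p.2 (p.1 (Fin.last (r+1))))
      left_inv := fun q => by
        refine Prod.ext ?_ ?_
        · simp [Fin.init_snoc]
        · simp [Fin.snoc_last, Fin.snoc_init_self]
      right_inv := fun p => by
        refine Prod.ext ?_ ?_
        · simp [Fin.snoc_last, Fin.snoc_init_self]
        · simp [Fin.init_snoc] }
  have hmem : ∀ q, q ∈ U2Set r m ↔ (StrictMono (E2 q).1 ∧ Monotone (E2 q).2 ∧
      ∀ (i : Fin (r+2)) (j : Fin m), i.1 = (r+2) - 1 → (E2 q).2 j ≤ (E2 q).1 i) := by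
    intro q
    have hE1 : (E2 q).1 = Fin.snoc q.1 (q.2 (Fin.last m)) := rfl
    have hE2 : (E2 q).2 = Fin.init q.2 := rfl
    rw [hE1, hE2]
    constructor
    · rintro ⟨hsm, hmo, hlt⟩
      refine ⟨(strictMono_snoc_iff _ _).2 ⟨hsm, fun i =>
        lt_of_le_of_lt (hsm.monotone (Fin.le_last i)) hlt⟩,
        fun i j hij => hmo (by simpa [Fin.castSucc_le_castSucc_iff] using hij),
        fun i j hi => ?_⟩
      have hieq : i = Fin.last (r+1) := Fin.ext hi
      subst hieq
      rw [Fin.snoc_last]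
      exact hmo (Fin.le_last _)
    · rintro ⟨hsm, hmo, hle⟩
      obtain ⟨hsm', hlt'⟩ := (strictMono_snoc_iff _ _).1 hsm
      have hmoq : Monotone q.2 := by
        rw [← Fin.snoc_init_self q.2]
        refine (monotone_snoc_iff _ _).2 ⟨hmo, fun j => ?_⟩
        have h5 := hle (Fin.last (r+1)) j rfl
        rwa [Fin.snoc_last] at h5
      exact ⟨hsm', hmoq, hlt' (Fin.last r)⟩
  have hval : ∀ q, trm (Fin.snoc a (b (Fin.last m))) (E2 q).1 * trm (Fin.init b) (E2 q).2
      = GFun a b q := by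
    intro q
    have hE1 : (E2 q).1 = Fin.snoc q.1 (q.2 (Fin.last m)) := rfl
    have hE2 : (E2 q).2 = Fin.init q.2 := rfl
    rw [hE1, hE2, trm_snoc]
    have hbd : trm b q.2 = trm (Fin.init b) (Fin.init q.2) *
        (1 / ((q.2 (Fin.last m) : ℕ) : ℝ≥0∞) ^ b (Fin.last m)) := by
      conv_lhs => rw [← Fin.snoc_init_self b, ← Fin.snoc_init_self q.2]
      rw [trm_snoc]
    rw [GFun, hbd]
    ring
  let e : U2Set r m ≃ {p : (Fin (r+2) → ℕ+) × (Fin m → ℕ+) // StrictMono p.1 ∧ Monotone p.2 ∧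
      ∀ (i : Fin (r+2)) (j : Fin m), i.1 = (r+2) - 1 → p.2 j ≤ p.1 i} :=
    Equiv.subtypeEquiv E2 hmem
  have h6 := Equiv.tsum_eq e (fun p : {p : (Fin (r+2) → ℕ+) × (Fin m → ℕ+) //
      StrictMono p.1 ∧ Monotone p.2 ∧
      ∀ (i : Fin (r+2)) (j : Fin m), i.1 = (r+2) - 1 → p.2 j ≤ p.1 i} =>
    trm (Fin.snoc a (b (Fin.last m))) p.1.1 * trm (Fin.init b) p.1.2)
  rw [ZUE, ← h6]
  refine tsum_congr fun q => ?_
  have hq : (e q).1 = E2 q.1 := rfl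
  rw [hq, hval q.1]

theorem mainE {r m : ℕ} (a : Fin (r+1) → ℕ) (b : Fin (m+1) → ℕ) :
    (∑' k : {k : Fin (r+1) → ℕ+ // StrictMono k}, trm a k.1) *
      (∑' l : {l : Fin (m+1) → ℕ+ // Monotone l}, trm b l.1)
      = ZUE a b + ZUE (Fin.snoc a (b (Fin.last m))) (Fin.init b) := by
  rw [step1 a b, step2 a b, stepU1 a b, stepU2 a b]


-- more auxiliary lemmas
section Transfer

lemma strictMono_comp_cast {n n' : ℕ} (h : n' = n) (k : Fin n → ℕ+) :
    StrictMono (fun i : Fin n' => k (Fin.cast h i)) ↔ StrictMono k := by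
  constructor
  · intro hs i j hij
    have h1 : Fin.cast h.symm i < Fin.cast h.symm j := by
      rw [Fin.lt_def] at hij ⊢; exact hij
    have h2 := hs h1
    have ei : Fin.cast h (Fin.cast h.symm i) = i := Fin.ext rfl
    have ej : Fin.cast h (Fin.cast h.symm j) = j := Fin.ext rfl
    simp only at h2
    rwa [ei, ej] at h2
  · intro hs i j hij
    refine hs ?_
    rw [Fin.lt_def] at hij ⊢; exact hij

lemma monotone_comp_cast {n n' : ℕ} (h : n' = n) (k : Fin n → ℕ+) :
    Monotone (fun i : Fin n' => k (Fin.cast h i)) ↔ Monotone k := by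
  constructor
  · intro hs i j hij
    have h1 : Fin.cast h.symm i ≤ Fin.cast h.symm j := by
      rw [Fin.le_def] at hij ⊢; exact hij
    have h2 := hs h1
    have ei : Fin.cast h (Fin.cast h.symm i) = i := Fin.ext rfl
    have ej : Fin.cast h (Fin.cast h.symm j) = j := Fin.ext rfl
    simp only at h2
    rwa [ei, ej] at h2
  · intro hs i j hij
    refine hs ?_
    rw [Fin.le_def] at hij ⊢; exact hij

lemma trm_comp_cast {n n' : ℕ} (h : n' = n) (a : Fin n → ℕ) (k : Fin n' → ℕ+) :
    trm a (fun i : Fin n => k (Fin.cast h.symm i)) = trm (fun i => a (Fin.cast h i)) k := by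
  rw [trm, trm]
  refine (Fintype.prod_equiv (finCongr h)
    (fun j : Fin n' => 1 / ((k j : ℕ) : ℝ≥0∞) ^ a (Fin.cast h j))
    (fun i : Fin n => 1 / ((k (Fin.cast h.symm i) : ℕ) : ℝ≥0∞) ^ a i)
    (fun j => ?_)).symm
  have h1 : Fin.cast h.symm (Fin.cast h j) = j := Fin.ext rfl
  show 1 / ((k j : ℕ) : ℝ≥0∞) ^ a (Fin.cast h j)
      = 1 / ((k (Fin.cast h.symm (Fin.cast h j)) : ℕ) : ℝ≥0∞) ^ a (Fin.cast h j)
  rw [h1]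

lemma reindex_single {n n' : ℕ} (h : n' = n) (a : Fin n → ℕ)
    (P : (Fin n → ℕ+) → Prop) (P' : (Fin n' → ℕ+) → Prop)
    (hP : ∀ k : Fin n' → ℕ+, P' k ↔ P (fun i => k (Fin.cast h.symm i))) :
    ∑' k : {k : Fin n' → ℕ+ // P' k}, trm (fun i => a (Fin.cast h i)) k.1
      = ∑' k : {k : Fin n → ℕ+ // P k}, trm a k.1 := by
  let E : {k : Fin n' → ℕ+ // P' k} ≃ {k : Fin n → ℕ+ // P k} :=
    Equiv.subtypeEquiv (Equiv.arrowCongr (finCongr h) (Equiv.refl ℕ+)) hP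
  rw [← E.tsum_eq (fun k : {k : Fin n → ℕ+ // P k} => trm a k.1)]
  refine tsum_congr fun k => ?_
  have h1 : (E k).1 = fun i : Fin n => k.1 (Fin.cast h.symm i) := rfl
  rw [h1, trm_comp_cast h a k.1]

lemma reindex_pair {nA nA' nB nB' : ℕ} (hA : nA' = nA) (hB : nB' = nB)
    (a : Fin nA → ℕ) (b : Fin nB → ℕ)
    (P : ((Fin nA → ℕ+) × (Fin nB → ℕ+)) → Prop)
    (P' : ((Fin nA' → ℕ+) × (Fin nB' → ℕ+)) → Prop)
    (hP : ∀ q, P' q ↔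
      P (fun i => q.1 (Fin.cast hA.symm i), fun j => q.2 (Fin.cast hB.symm j))) :
    ∑' p : {p : (Fin nA' → ℕ+) × (Fin nB' → ℕ+) // P' p},
        trm (fun i => a (Fin.cast hA i)) p.1.1 * trm (fun j => b (Fin.cast hB j)) p.1.2
      = ∑' p : {p : (Fin nA → ℕ+) × (Fin nB → ℕ+) // P p},
        trm a p.1.1 * trm b p.1.2 := by
  let E0 : ((Fin nA' → ℕ+) × (Fin nB' → ℕ+)) ≃ ((Fin nA → ℕ+) × (Fin nB → ℕ+)) :=
    { toFun := fun q => (fun i => q.1 (Fin.cast hA.symm i), fun j => q.2 (Fin.cast hB.symm j))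
      invFun := fun q => (fun i => q.1 (Fin.cast hA i), fun j => q.2 (Fin.cast hB j))
      left_inv := fun q => rfl
      right_inv := fun q => rfl }
  let E : {p : (Fin nA' → ℕ+) × (Fin nB' → ℕ+) // P' p}
      ≃ {p : (Fin nA → ℕ+) × (Fin nB → ℕ+) // P p} :=
    Equiv.subtypeEquiv E0 hP
  rw [← E.tsum_eq (fun p : {p : (Fin nA → ℕ+) × (Fin nB → ℕ+) // P p} =>
    trm a p.1.1 * trm b p.1.2)]
  refine tsum_congr fun p => ?_
  have h1 : (E p).1.1 = fun i : Fin nA => p.1.1 (Fin.cast hA.symm i) := rfl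
  have h2 : (E p).1.2 = fun j : Fin nB => p.1.2 (Fin.cast hB.symm j) := rfl
  rw [h1, h2, trm_comp_cast hA a p.1.1, trm_comp_cast hB b p.1.2]

end Transfer

section Final

lemma mz_ofFn {n : ℕ} (a : Fin n → ℕ) :
    mz (List.ofFn a) = (∑' k : {k : Fin n → ℕ+ // StrictMono k}, trm a k.1).toReal := by
  have hlen : (List.ofFn a).length = n := List.length_ofFn
  have hget : ∀ i : Fin (List.ofFn a).length, (List.ofFn a).get i = a (Fin.cast hlen i) :=
    fun i => (List.get_ofFn a i).trans (congrArg a (Fin.ext rfl))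
  have h0 : mz (List.ofFn a) = ∑' k : {k : Fin (List.ofFn a).length → ℕ+ // StrictMono k},
      ∏ i, (1 : ℝ) / ((k.1 i : ℕ) : ℝ) ^ (List.ofFn a).get i := rfl
  have h1 : ∀ k : {k : Fin (List.ofFn a).length → ℕ+ // StrictMono k},
      (∏ i, (1 : ℝ) / ((k.1 i : ℕ) : ℝ) ^ (List.ofFn a).get i)
        = (trm (fun i => a (Fin.cast hlen i)) k.1).toReal := by
    intro k
    rw [trm_toReal]
    exact Finset.prod_congr rfl fun i _ => by rw [hget i]
  rw [h0, tsum_congr h1, ← ENNReal.tsum_toReal_eq (fun _ => trm_ne_top _ _)]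
  congr 1
  exact reindex_single hlen a (fun k => StrictMono k) (fun k => StrictMono k)
    (fun k => (strictMono_comp_cast hlen.symm k).symm)

lemma mzs_ofFn {n : ℕ} (a : Fin n → ℕ) :
    mzs (List.ofFn a) = (∑' k : {k : Fin n → ℕ+ // Monotone k}, trm a k.1).toReal := by
  have hlen : (List.ofFn a).length = n := List.length_ofFn
  have hget : ∀ i : Fin (List.ofFn a).length, (List.ofFn a).get i = a (Fin.cast hlen i) :=
    fun i => (List.get_ofFn a i).trans (congrArg a (Fin.ext rfl))
  have h0 : mzs (List.ofFn a) = ∑' k : {k : Fin (List.ofFn a).length → ℕ+ // Monotone k},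
      ∏ i, (1 : ℝ) / ((k.1 i : ℕ) : ℝ) ^ (List.ofFn a).get i := rfl
  have h1 : ∀ k : {k : Fin (List.ofFn a).length → ℕ+ // Monotone k},
      (∏ i, (1 : ℝ) / ((k.1 i : ℕ) : ℝ) ^ (List.ofFn a).get i)
        = (trm (fun i => a (Fin.cast hlen i)) k.1).toReal := by
    intro k
    rw [trm_toReal]
    exact Finset.prod_congr rfl fun i _ => by rw [hget i]
  rw [h0, tsum_congr h1, ← ENNReal.tsum_toReal_eq (fun _ => trm_ne_top _ _)]
  congr 1
  exact reindex_single hlen a (fun k => Monotone k) (fun k => Monotone k)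
    (fun k => (monotone_comp_cast hlen.symm k).symm)

lemma ZU_ofFn {n m : ℕ} (a : Fin n → ℕ) (b : Fin m → ℕ) :
    ZU (List.ofFn a) (List.ofFn b) = (ZUE a b).toReal := by
  have hA : (List.ofFn a).length = n := List.length_ofFn
  have hB : (List.ofFn b).length = m := List.length_ofFn
  have hgetA : ∀ i : Fin (List.ofFn a).length, (List.ofFn a).get i = a (Fin.cast hA i) :=
    fun i => (List.get_ofFn a i).trans (congrArg a (Fin.ext rfl))
  have hgetB : ∀ j : Fin (List.ofFn b).length, (List.ofFn b).get j = b (Fin.cast hB j) :=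
    fun j => (List.get_ofFn b j).trans (congrArg b (Fin.ext rfl))
  have h0 : ZU (List.ofFn a) (List.ofFn b)
      = ∑' p : {p : (Fin (List.ofFn a).length → ℕ+) × (Fin (List.ofFn b).length → ℕ+) //
          StrictMono p.1 ∧ Monotone p.2 ∧
          ∀ (i : Fin (List.ofFn a).length) (j : Fin (List.ofFn b).length),
            i.1 = (List.ofFn a).length - 1 → p.2 j ≤ p.1 i},
        (∏ i, (1 : ℝ) / ((p.1.1 i : ℕ) : ℝ) ^ (List.ofFn a).get i) *
          ∏ j, (1 : ℝ) / ((p.1.2 j : ℕ) : ℝ) ^ (List.ofFn b).get j := rfl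
  have h1 : ∀ p : {p : (Fin (List.ofFn a).length → ℕ+) × (Fin (List.ofFn b).length → ℕ+) //
          StrictMono p.1 ∧ Monotone p.2 ∧
          ∀ (i : Fin (List.ofFn a).length) (j : Fin (List.ofFn b).length),
            i.1 = (List.ofFn a).length - 1 → p.2 j ≤ p.1 i},
      (∏ i, (1 : ℝ) / ((p.1.1 i : ℕ) : ℝ) ^ (List.ofFn a).get i) *
          ∏ j, (1 : ℝ) / ((p.1.2 j : ℕ) : ℝ) ^ (List.ofFn b).get j
        = ((trm (fun i => a (Fin.cast hA i)) p.1.1) *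
            (trm (fun j => b (Fin.cast hB j)) p.1.2)).toReal := by
    intro p
    rw [ENNReal.toReal_mul, trm_toReal, trm_toReal]
    refine congrArg₂ (· * ·) ?_ ?_
    · exact Finset.prod_congr rfl fun i _ => by rw [hgetA i]
    · exact Finset.prod_congr rfl fun j _ => by rw [hgetB j]
  rw [h0, tsum_congr h1, ← ENNReal.tsum_toReal_eq
    (fun _ => ENNReal.mul_ne_top (trm_ne_top _ _) (trm_ne_top _ _))]
  congr 1
  refine reindex_pair hA hB a b
    (fun q => StrictMono q.1 ∧ Monotone q.2 ∧
      ∀ (i : Fin n) (j : Fin m), i.1 = n - 1 → q.2 j ≤ q.1 i)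
    (fun q => StrictMono q.1 ∧ Monotone q.2 ∧
      ∀ (i : Fin (List.ofFn a).length) (j : Fin (List.ofFn b).length),
        i.1 = (List.ofFn a).length - 1 → q.2 j ≤ q.1 i)
    (fun q => ?_)
  refine and_congr ((strictMono_comp_cast hA.symm q.1).symm)
    (and_congr ((monotone_comp_cast hB.symm q.2).symm) ?_)
  constructor
  · intro H i' j' hi'
    refine H (Fin.cast hA.symm i') (Fin.cast hB.symm j') ?_
    show i'.1 = (List.ofFn a).length - 1
    rw [hA]; exact hi'
  · intro H i j hi
    have h2 := H (Fin.cast hA i) (Fin.cast hB j) (by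
      show i.1 = n - 1
      have hA' := hA; omega)
    exact h2

lemma mono_le' {m : ℕ} (b : Fin (m+1) → ℕ) (hb : ∀ j, 1 ≤ b j) (hl : 2 ≤ b (Fin.last m)) :
    ∑' l : {l : Fin (m+1) → ℕ+ // Monotone l}, trm b l.1 ≤ 2 ^ (m+1) := by
  have hle : ∑' l : {l : Fin (m+1) → ℕ+ // Monotone l}, trm b l.1
      ≤ ∑' l : {l : Fin (m+1) → ℕ+ // Monotone l ∧ ∀ j, (1 : ℕ+) ≤ l j}, trm b l.1 :=
    Summable.tsum_le_tsum_of_inj (fun l => ⟨l.1, l.2, fun j => (l.1 j).one_le⟩)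
      (fun x y h => Subtype.ext (by simpa using congrArg Subtype.val h))
      (fun _ _ => zero_le) (fun _ => le_rfl) ENNReal.summable ENNReal.summable
  refine le_trans hle ?_
  have h1 := mono_bound m b hb hl 1
  simpa using h1

lemma strict_le_mono {n : ℕ} (a : Fin n → ℕ) :
    ∑' k : {k : Fin n → ℕ+ // StrictMono k}, trm a k.1
      ≤ ∑' k : {k : Fin n → ℕ+ // Monotone k}, trm a k.1 :=
  Summable.tsum_le_tsum_of_inj (fun k => ⟨k.1, k.2.monotone⟩)
    (fun x y h => Subtype.ext (by simpa using congrArg Subtype.val h))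
    (fun _ _ => zero_le) (fun _ => le_rfl) ENNReal.summable ENNReal.summable

end Final
end MZVAux

set_option maxHeartbeats 4000000 in
/-- For tuples of positive integers with `r, m ≥ 1`, `α_r ≥ 2`, `β_m ≥ 2`:
`ζ(α) ζ⋆(β) = Z_U(α₁,…,α_r; β₁,…,β_m) + Z_U(α₁,…,α_r,β_m; β₁,…,β_{m-1})`. -/
theorem mz_mul_mzs_eq_ZU (r m : ℕ) (hr : 1 ≤ r) (hm : 1 ≤ m)
    (a : Fin r → ℕ) (b : Fin m → ℕ)
    (hapos : ∀ i, 1 ≤ a i) (hbpos : ∀ j, 1 ≤ b j)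
    (har : 2 ≤ a ⟨r - 1, by omega⟩) (hbm : 2 ≤ b ⟨m - 1, by omega⟩) :
    mz (List.ofFn a) * mzs (List.ofFn b) =
      ZU (List.ofFn a) (List.ofFn b) +
      ZU (List.ofFn (Fin.snoc a (b ⟨m - 1, by omega⟩)))
         (List.ofFn (fun j : Fin (m - 1) => b ⟨j.1, by have := j.isLt; omega⟩)) := by
  obtain ⟨r', rfl⟩ : ∃ r', r = r' + 1 := ⟨r - 1, by omega⟩
  obtain ⟨m', rfl⟩ : ∃ m', m = m' + 1 := ⟨m - 1, by omega⟩
  have hblast : b ⟨m' + 1 - 1, by omega⟩ = b (Fin.last m') := congrArg b (Fin.ext rfl)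
  have hinit : (fun j : Fin (m' + 1 - 1) => b ⟨j.1, by have := j.isLt; omega⟩)
      = Fin.init b := funext fun j => congrArg b (Fin.ext rfl)
  rw [hblast, hinit]
  rw [MZVAux.mz_ofFn a, MZVAux.mzs_ofFn b, MZVAux.ZU_ofFn a b,
    MZVAux.ZU_ofFn (Fin.snoc a (b (Fin.last m'))) (Fin.init b)]
  have har' : 2 ≤ a (Fin.last r') := har
  have hbm' : 2 ≤ b (Fin.last m') := hbm
  have hS1 : ∑' k : {k : Fin (r'+1) → ℕ+ // StrictMono k}, MZVAux.trm a k.1 ≤ 2 ^ (r'+1) :=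
    le_trans (MZVAux.strict_le_mono a) (MZVAux.mono_le' a hapos har')
  have hS2 : ∑' l : {l : Fin (m'+1) → ℕ+ // Monotone l}, MZVAux.trm b l.1 ≤ 2 ^ (m'+1) :=
    MZVAux.mono_le' b hbpos hbm'
  have hpow1 : ((2 : ℝ≥0∞) ^ (r'+1)) ≠ ⊤ := ENNReal.pow_ne_top (by norm_num)
  have hpow2 : ((2 : ℝ≥0∞) ^ (m'+1)) ≠ ⊤ := ENNReal.pow_ne_top (by norm_num)
  have hprod : (∑' k : {k : Fin (r'+1) → ℕ+ // StrictMono k}, MZVAux.trm a k.1) *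
      (∑' l : {l : Fin (m'+1) → ℕ+ // Monotone l}, MZVAux.trm b l.1) ≠ ⊤ :=
    ENNReal.mul_ne_top (ne_top_of_le_ne_top hpow1 hS1) (ne_top_of_le_ne_top hpow2 hS2)
  have hmain := MZVAux.mainE a b
  have hsum_ne : MZVAux.ZUE a b
      + MZVAux.ZUE (Fin.snoc a (b (Fin.last m'))) (Fin.init b) ≠ ⊤ := hmain ▸ hprod
  have hfin1 : MZVAux.ZUE a b ≠ ⊤ := ne_top_of_le_ne_top hsum_ne le_self_add
  have hfin2 : MZVAux.ZUE (Fin.snoc a (b (Fin.last m'))) (Fin.init b) ≠ ⊤ :=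
    ne_top_of_le_ne_top hsum_ne le_add_self
  rw [← ENNReal.toReal_mul, hmain, ENNReal.toReal_add hfin1 hfin2]
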